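/- Let B, C, D be N×N complex matrices with B and C normal, BC = CB, BC* = C*B, and D positive semidefinite. Then the N·4 × N·4 matrix ρ = √D (𝟙, B, C, CB)* (𝟙, B, C, CB) √D — i.e. the Gram-type matrix with (i,j) block √D Mᵢ* Mⱼ √D where (M₁,M₂,M₃,M₄) = (𝟙, B, C, CB) — is fully separable as a state on ℂ²⊗ℂ²⊗ℂᴺ. -/

import Mathlib

open Matrix Kronecker ComplexOrder

/-- Full separability on ℂᵃ⊗ℂᵇ⊗ℂᶜ: a finite sum of tensor products of
positive semidefinite matrices on the three factors. -/
def Sep3 {a b c : ℕ} (ρ : Matrix (Fin a × Fin b × Fin c) (Fin a × Fin b × Fin c) ℂ) : Prop :=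
  ∃ (n : ℕ) (A : Fin n → Matrix (Fin a) (Fin a) ℂ)
    (B : Fin n → Matrix (Fin b) (Fin b) ℂ)
    (C : Fin n → Matrix (Fin c) (Fin c) ℂ),
    (∀ i, (A i).PosSemidef) ∧ (∀ i, (B i).PosSemidef) ∧ (∀ i, (C i).PosSemidef) ∧
    ρ = ∑ i, A i ⊗ₖ (B i ⊗ₖ C i)

/-- The square root of a positive semidefinite matrix, as defined in the older Mathlib
(`Matrix.PosSemidef.sqrt`, since removed). -/
noncomputable def Matrix.PosSemidef.sqrt {n 𝕜 : Type*} [Fintype n] [DecidableEq n] [RCLike 𝕜]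
    {A : Matrix n n 𝕜} (hA : A.PosSemidef) : Matrix n n 𝕜 :=
  (hA.1.eigenvectorUnitary : Matrix n n 𝕜) *
    diagonal ((↑) ∘ Real.sqrt ∘ hA.1.eigenvalues) * (star hA.1.eigenvectorUnitary : Matrix n n 𝕜)

/-- Outer products are positive semidefinite. -/
lemma outer_psd {n : Type*} [Fintype n] (f : n → ℂ) :
    (Matrix.of fun a b => f a * star (f b)).PosSemidef := by
  constructor
  · ext a b
    simp [Matrix.conjTranspose_apply, mul_comm]
  · exact (Matrix.posSemidef_vecMulVec_self_star f).2


/-- A commuting family of four Hermitian matrices admits a joint orthonormal eigenbasis. -/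
lemma exists_joint_eigenbasis {N : ℕ} (X : Fin 4 → Matrix (Fin N) (Fin N) ℂ)
    (hXherm : ∀ i, (X i).IsHermitian) (hXcomm : ∀ i j, Commute (X i) (X j)) :
    ∃ (v : Fin N → (Fin N → ℂ)) (χ : Fin N → (Fin 4 → ℂ)),
      (∀ j k, (∑ s, star (v j s) * v k s) = if j = k then (1 : ℂ) else 0) ∧
      (∀ k i, (X i) *ᵥ v k = χ k i • v k) := by
  classical
  set T : Fin 4 → Module.End ℂ (EuclideanSpace ℂ (Fin N)) :=
    fun i => Matrix.toEuclideanLin (X i) with hTdef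
  have hmulT : ∀ (P Q : Matrix (Fin N) (Fin N) ℂ),
      Matrix.toEuclideanLin P * Matrix.toEuclideanLin Q = Matrix.toEuclideanLin (P * Q) := by
    intro P Q
    apply LinearMap.ext
    intro x
    show Matrix.toEuclideanLin P (Matrix.toEuclideanLin Q x) = _
    simp [Matrix.toEuclideanLin_apply, Matrix.mulVec_mulVec]
  have hSym : ∀ i, (T i).IsSymmetric := fun i =>
    Matrix.isHermitian_iff_isSymmetric.mp (hXherm i)
  have hTcomm : Pairwise (Function.onFun Commute T) := by
    intro i j _
    show T i * T j = T j * T i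
    simp only [hTdef]
    rw [hmulT, hmulT, (hXcomm i j).eq]
  set V : (Fin 4 → ℂ) → Submodule ℂ (EuclideanSpace ℂ (Fin N)) :=
    fun χ => ⨅ i, Module.End.eigenspace (T i) (χ i) with hVdef
  have hOrthV := LinearMap.IsSymmetric.orthogonalFamily_iInf_eigenspaces hSym
  have hInd : iSupIndep V := hOrthV.independent
  have hTop : ⨆ χ, V χ = ⊤ :=
    LinearMap.IsSymmetric.iSup_iInf_eq_top_of_commute hSym hTcomm
  letI : Fintype {χ : Fin 4 → ℂ // V χ ≠ ⊥} := hInd.fintypeNeBotOfFiniteDimensional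
  set V' : {χ : Fin 4 → ℂ // V χ ≠ ⊥} → Submodule ℂ (EuclideanSpace ℂ (Fin N)) :=
    fun s => V s.val with hV'def
  have hInd' : iSupIndep V' := hInd.comp Subtype.val_injective
  have hTop' : ⨆ s, V' s = ⊤ := by
    apply le_antisymm le_top
    rw [← hTop]
    apply iSup_le
    intro χ
    by_cases h : V χ = ⊥
    · simp [h]
    · exact le_iSup V' ⟨χ, h⟩
  have hInternal : DirectSum.IsInternal V' :=
    DirectSum.isInternal_submodule_of_iSupIndep_of_iSup_eq_top hInd' hTop'
  have hOrth' := hOrthV.comp (f := (Subtype.val : {χ : Fin 4 → ℂ // V χ ≠ ⊥} → _))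
    Subtype.val_injective
  have hn : Module.finrank ℂ (EuclideanSpace ℂ (Fin N)) = N := finrank_euclideanSpace_fin
  set b := hInternal.subordinateOrthonormalBasis hn hOrth' with hbdef
  set χf : Fin N → (Fin 4 → ℂ) :=
    fun k => (hInternal.subordinateOrthonormalBasisIndex hn k hOrth').val with hχdef
  have hmem : ∀ k, b k ∈ V (χf k) := fun k =>
    hInternal.subordinateOrthonormalBasis_subordinate hn k hOrth'
  refine ⟨fun k => (WithLp.equiv 2 _) (b k), χf, ?_, ?_⟩
  · intro j k
    have hb := orthonormal_iff_ite.mp b.orthonormal j k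
    simp only [PiLp.inner_apply, RCLike.inner_apply] at hb
    rw [← hb]
    apply Finset.sum_congr rfl
    intro s _
    exact mul_comm _ _
  · intro k i
    have h := (Submodule.mem_iInf _).mp (hmem k) i
    rw [Module.End.mem_eigenspace_iff] at h
    exact congrArg (WithLp.equiv 2 _) h

set_option maxHeartbeats 1000000 in
theorem stmt7 {N : ℕ} (B C D : Matrix (Fin N) (Fin N) ℂ)
    (hB : B * Bᴴ = Bᴴ * B) (hC : C * Cᴴ = Cᴴ * C)
    (hBC : B * C = C * B) (hBC' : B * Cᴴ = Cᴴ * B)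
    (hD : D.PosSemidef) :
    letI M : Fin 2 → Fin 2 → Matrix (Fin N) (Fin N) ℂ := ![![1, B], ![C, C * B]]
    letI ρ : Matrix (Fin 2 × Fin 2 × Fin N) (Fin 2 × Fin 2 × Fin N) ℂ :=
      fun p q => (hD.sqrt * (M p.1 p.2.1)ᴴ * (M q.1 q.2.1) * hD.sqrt) p.2.2 q.2.2
    Sep3 ρ := by
  classical
  set M : Fin 2 → Fin 2 → Matrix (Fin N) (Fin N) ℂ := ![![1, B], ![C, C * B]] with hMdef
  -- commuting generators
  have hg : ∀ (P Q : Matrix (Fin N) (Fin N) ℂ),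
      P ∈ ({B, Bᴴ, C, Cᴴ} : Set _) → Q ∈ ({B, Bᴴ, C, Cᴴ} : Set _) → Commute P Q := by
    have h1 : Commute B Bᴴ := hB
    have h2 : Commute C Cᴴ := hC
    have h3 : Commute B C := hBC
    have h4 : Commute B Cᴴ := hBC'
    have h5 : Commute Bᴴ C := by
      have := congrArg Matrix.conjTranspose hBC'
      exact (by simpa [Matrix.conjTranspose_mul] using this.symm : Bᴴ * C = C * Bᴴ)
    have h6 : Commute Bᴴ Cᴴ := by
      have := congrArg Matrix.conjTranspose hBC
      exact (by simpa [Matrix.conjTranspose_mul] using this.symm : Bᴴ * Cᴴ = Cᴴ * Bᴴ)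
    rintro P Q (rfl | rfl | rfl | rfl) (rfl | rfl | rfl | rfl) <;>
      first
        | exact Commute.refl _
        | assumption
        | exact h1.symm
        | exact h2.symm
        | exact h3.symm
        | exact h4.symm
        | exact h5.symm
        | exact h6.symm
  -- four commuting Hermitian matrices
  set X : Fin 4 → Matrix (Fin N) (Fin N) ℂ :=
    ![B + Bᴴ, Complex.I • (B - Bᴴ), C + Cᴴ, Complex.I • (C - Cᴴ)] with hXdef
  have hXherm : ∀ i, (X i).IsHermitian := by
    intro i
    fin_cases i <;>
      simp [hXdef, Matrix.IsHermitian, Matrix.conjTranspose_add, Matrix.conjTranspose_sub,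
        Matrix.conjTranspose_smul, Complex.conj_I, add_comm, neg_smul, smul_sub, sub_eq_add_neg,
        neg_neg, add_comm] <;> abel
  have hXcomm : ∀ i j, Commute (X i) (X j) := by
    have key : ∀ P Q R S : Matrix (Fin N) (Fin N) ℂ,
        P ∈ ({B, Bᴴ, C, Cᴴ} : Set _) → Q ∈ ({B, Bᴴ, C, Cᴴ} : Set _) →
        R ∈ ({B, Bᴴ, C, Cᴴ} : Set _) → S ∈ ({B, Bᴴ, C, Cᴴ} : Set _) →
        ∀ (u v : ℂ), Commute (P + u • Q) (R + v • S) := by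
      intro P Q R S hP hQ hR hS u v
      exact (((hg P R hP hR).add_right (((hg P S hP hS).smul_right v))).add_left
        (((hg Q R hQ hR).add_right ((hg Q S hQ hS).smul_right v)).smul_left u))
    set P : Fin 4 → Matrix (Fin N) (Fin N) ℂ := ![B, B, C, C] with hPdef
    set Q : Fin 4 → Matrix (Fin N) (Fin N) ℂ := ![Bᴴ, Bᴴ, Cᴴ, Cᴴ] with hQdef
    set u : Fin 4 → ℂ := ![1, -1, 1, -1] with hudef
    set w : Fin 4 → ℂ := ![1, Complex.I, 1, Complex.I] with hwdef
    have hXeq : ∀ i, X i = w i • (P i + u i • Q i) := by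
      intro i
      fin_cases i <;>
        simp [hXdef, hPdef, hQdef, hudef, hwdef, smul_sub, sub_eq_add_neg, neg_smul]
    have hPmem : ∀ i, P i ∈ ({B, Bᴴ, C, Cᴴ} : Set _) := by
      intro i; fin_cases i <;> simp [hPdef]
    have hQmem : ∀ i, Q i ∈ ({B, Bᴴ, C, Cᴴ} : Set _) := by
      intro i; fin_cases i <;> simp [hQdef]
    intro i j
    rw [hXeq i, hXeq j]
    exact ((key _ _ _ _ (hPmem i) (hQmem i) (hPmem j) (hQmem j) (u i) (u j)).smul_left
      (w i)).smul_right (w j)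
  obtain ⟨v, χf, hortho, heig'⟩ := exists_joint_eigenbasis X hXherm hXcomm
  have heig : ∀ k i, (X i) *ᵥ v k = χf k i • v k := fun k i => heig' k i
  -- scalar eigenvalues for Bᴴ and Cᴴ
  set βb : Fin N → ℂ := fun k => (χf k 0 + Complex.I * χf k 1) / 2 with hβdef
  set γc : Fin N → ℂ := fun k => (χf k 2 + Complex.I * χf k 3) / 2 with hγdef
  have htwoB : X 0 + Complex.I • X 1 = (2 : ℂ) • Bᴴ := by
    show (B + Bᴴ) + Complex.I • (Complex.I • (B - Bᴴ)) = (2 : ℂ) • Bᴴ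
    rw [smul_smul, Complex.I_mul_I, neg_one_smul, two_smul]
    abel
  have htwoC : X 2 + Complex.I • X 3 = (2 : ℂ) • Cᴴ := by
    show (C + Cᴴ) + Complex.I • (Complex.I • (C - Cᴴ)) = (2 : ℂ) • Cᴴ
    rw [smul_smul, Complex.I_mul_I, neg_one_smul, two_smul]
    abel
  have hBH : ∀ k, Bᴴ *ᵥ v k = βb k • v k := by
    intro k
    have h : (2:ℂ) • (Bᴴ *ᵥ v k) = (χf k 0 + Complex.I * χf k 1) • v k := by
      calc (2:ℂ) • (Bᴴ *ᵥ v k) = ((2:ℂ) • Bᴴ) *ᵥ v k := by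
            rw [Matrix.smul_mulVec]
        _ = (X 0 + Complex.I • X 1) *ᵥ v k := by rw [← htwoB]
        _ = X 0 *ᵥ v k + Complex.I • (X 1 *ᵥ v k) := by
            rw [Matrix.add_mulVec, Matrix.smul_mulVec]
        _ = (χf k 0 + Complex.I * χf k 1) • v k := by
            rw [heig k 0, heig k 1, add_smul, smul_smul]
    have h2 := congrArg (fun w => ((2:ℂ)⁻¹) • w) h
    simp only [smul_smul] at h2
    rw [inv_mul_cancel₀ (by norm_num : (2:ℂ) ≠ 0), one_smul] at h2
    rw [h2]
    simp only [hβdef, hγdef]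
    congr 1
    ring
  have hCH : ∀ k, Cᴴ *ᵥ v k = γc k • v k := by
    intro k
    have h : (2:ℂ) • (Cᴴ *ᵥ v k) = (χf k 2 + Complex.I * χf k 3) • v k := by
      calc (2:ℂ) • (Cᴴ *ᵥ v k) = ((2:ℂ) • Cᴴ) *ᵥ v k := by
            rw [Matrix.smul_mulVec]
        _ = (X 2 + Complex.I • X 3) *ᵥ v k := by rw [← htwoC]
        _ = X 2 *ᵥ v k + Complex.I • (X 3 *ᵥ v k) := by
            rw [Matrix.add_mulVec, Matrix.smul_mulVec]
        _ = (χf k 2 + Complex.I * χf k 3) • v k := by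
            rw [heig k 2, heig k 3, add_smul, smul_smul]
    have h2 := congrArg (fun w => ((2:ℂ)⁻¹) • w) h
    simp only [smul_smul] at h2
    rw [inv_mul_cancel₀ (by norm_num : (2:ℂ) ≠ 0), one_smul] at h2
    rw [h2]
    simp only [hβdef, hγdef]
    congr 1
    ring
  -- eigenvector property for the M's
  have hMvec : ∀ (i j : Fin 2) k,
      (M i j)ᴴ *ᵥ v k = (γc k ^ (i : ℕ) * βb k ^ (j : ℕ)) • v k := by
    intro i j k
    have h4 : (Bᴴ * Cᴴ) *ᵥ v k = (γc k * βb k) • v k := by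
      rw [← Matrix.mulVec_mulVec, hCH k, Matrix.mulVec_smul, hBH k, smul_smul, mul_comm]
    fin_cases i <;> fin_cases j <;>
      simp [hMdef, hBH k, hCH k, h4]
  -- resolution of identity
  set U : Matrix (Fin N) (Fin N) ℂ := Matrix.of fun s k => v k s with hUdef
  have hUU : Uᴴ * U = 1 := by
    ext j k
    have hb := hortho j k
    simp only [Matrix.mul_apply, Matrix.conjTranspose_apply, Matrix.one_apply, hUdef,
      Matrix.of_apply]
    rw [hb]
  have hUU' : U * Uᴴ = 1 := mul_eq_one_comm.mp hUU
  -- key matrix identity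
  have hPU : ∀ i j : Fin 2, (M i j)ᴴ * U
      = U * Matrix.diagonal (fun k => γc k ^ (i : ℕ) * βb k ^ (j : ℕ)) := by
    intro i j
    ext s k
    have h := congrFun (hMvec i j k) s
    simp only [Matrix.mulVec, dotProduct, Pi.smul_apply, smul_eq_mul] at h
    rw [Matrix.mul_diagonal, Matrix.mul_apply]
    simp only [hUdef, Matrix.of_apply]
    rw [h]
    exact mul_comm (γc k ^ (i : ℕ) * βb k ^ (j : ℕ)) (v k s)
  set W : Matrix (Fin N) (Fin N) ℂ := hD.sqrt * U with hWdef
  have hsqrtH : hD.sqrtᴴ = hD.sqrt := by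
    simp [Matrix.PosSemidef.sqrt, Matrix.conjTranspose_mul, Matrix.mul_assoc,
      Matrix.star_eq_conjTranspose, Function.comp_def, Pi.star_def, Complex.star_def]
  have hstep : ∀ i j i' j' : Fin 2,
      hD.sqrt * (M i j)ᴴ * (M i' j') * hD.sqrt
        = W * Matrix.diagonal (fun k => (γc k ^ (i : ℕ) * βb k ^ (j : ℕ))
            * star (γc k ^ (i' : ℕ) * βb k ^ (j' : ℕ))) * Wᴴ := by
    intro i j i' j'
    have hQ : Uᴴ * M i' j' = Matrix.diagonal
        (fun k => star (γc k ^ (i' : ℕ) * βb k ^ (j' : ℕ))) * Uᴴ := by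
      have h2 := congrArg Matrix.conjTranspose (hPU i' j')
      simp only [Matrix.conjTranspose_mul, Matrix.conjTranspose_conjTranspose,
        Matrix.diagonal_conjTranspose, Pi.star_def] at h2
      exact h2
    have hmid : (M i j)ᴴ * (M i' j')
        = U * Matrix.diagonal (fun k => (γc k ^ (i : ℕ) * βb k ^ (j : ℕ))
            * star (γc k ^ (i' : ℕ) * βb k ^ (j' : ℕ))) * Uᴴ := by
      have e1 : (M i j)ᴴ * (M i' j') = ((M i j)ᴴ * U) * (Uᴴ * (M i' j')) := by
        calc (M i j)ᴴ * (M i' j') = (M i j)ᴴ * ((U * Uᴴ) * (M i' j')) := by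
              rw [hUU', Matrix.one_mul]
          _ = ((M i j)ᴴ * U) * (Uᴴ * (M i' j')) := by simp only [Matrix.mul_assoc]
      rw [e1, hPU i j, hQ, Matrix.mul_assoc, ← Matrix.mul_assoc
        (Matrix.diagonal fun k => γc k ^ (i : ℕ) * βb k ^ (j : ℕ)),
        Matrix.diagonal_mul_diagonal, ← Matrix.mul_assoc]
    calc hD.sqrt * (M i j)ᴴ * (M i' j') * hD.sqrt
        = hD.sqrt * ((M i j)ᴴ * (M i' j')) * hD.sqrt := by simp only [Matrix.mul_assoc]
      _ = hD.sqrt * (U * Matrix.diagonal (fun k => (γc k ^ (i : ℕ) * βb k ^ (j : ℕ))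
            * star (γc k ^ (i' : ℕ) * βb k ^ (j' : ℕ))) * Uᴴ) * hD.sqrt := by rw [hmid]
      _ = W * Matrix.diagonal (fun k => (γc k ^ (i : ℕ) * βb k ^ (j : ℕ))
            * star (γc k ^ (i' : ℕ) * βb k ^ (j' : ℕ))) * Wᴴ := by
          rw [hWdef, Matrix.conjTranspose_mul, hsqrtH]
          simp only [Matrix.mul_assoc]
  -- assemble the separable decomposition
  refine ⟨N,
    (fun k => Matrix.of fun i i' : Fin 2 => γc k ^ (i : ℕ) * star (γc k ^ ((i' : Fin 2) : ℕ))),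
    (fun k => Matrix.of fun j j' : Fin 2 => βb k ^ (j : ℕ) * star (βb k ^ ((j' : Fin 2) : ℕ))),
    (fun k => Matrix.of fun s t : Fin N => W s k * star (W t k)),
    fun k => outer_psd _, fun k => outer_psd _, fun k => outer_psd (fun s => W s k), ?_⟩
  have hentry : ∀ (dd : Fin N → ℂ) (s t : Fin N),
      (W * Matrix.diagonal dd * Wᴴ) s t = ∑ k, W s k * dd k * star (W t k) := by
    intro dd s t
    rw [Matrix.mul_apply]
    apply Finset.sum_congr rfl
    intro x _
    rw [Matrix.mul_diagonal, Matrix.conjTranspose_apply]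
  funext p q
  obtain ⟨i, j, s⟩ := p
  obtain ⟨i', j', t⟩ := q
  show (hD.sqrt * (M i j)ᴴ * (M i' j') * hD.sqrt) s t = _
  rw [hstep i j i' j', hentry]
  simp only [Matrix.sum_apply, Matrix.kroneckerMap_apply, Matrix.of_apply]
  apply Finset.sum_congr rfl
  intro k _
  simp only [star_mul']
  ring
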